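/- For h ∈ (−2,0) with k = √(2+h)/2, the substitution defined by −1/√(q² + 1/4) = (2+h)s² − 2 transforms the integrand via √(h + 1/√(q² + 1/4)) dq = 2k² √(1−s²) / (√(1−k²s²)(1−2k²s²)²) ds, so that ∫₀^{q_max} √(h + 1/√(q²+1/4)) dq = 2k² ∫₀¹ √(1−s²) / (√(1−k²s²)(1−2k²s²)²) ds. -/

import Mathlib

open Real Set

set_option maxHeartbeats 1000000 in
theorem stmt_6 (h : ℝ) (hh : h ∈ Ioo (-2 : ℝ) 0)
    (k : ℝ) (hk : k = Real.sqrt (2 + h) / 2)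
    (qmax : ℝ) (hq : qmax = Real.sqrt (1 / h^2 - 1/4))
    (qs : ℝ → ℝ)
    (hqs : ∀ s, qs s = k * s * Real.sqrt (1 - k^2 * s^2) / (1 - 2 * k^2 * s^2)) :
    (∀ s ∈ Icc (0 : ℝ) 1,
      -(1 / Real.sqrt ((qs s)^2 + 1/4)) = (2 + h) * s^2 - 2) ∧
    (∀ s ∈ Ioo (0 : ℝ) 1,
      HasDerivAt qs
        (2 * k^2 * Real.sqrt (1 - s^2) /
          (Real.sqrt (1 - k^2 * s^2) * (1 - 2 * k^2 * s^2)^2) /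
          Real.sqrt (h + 1 / Real.sqrt ((qs s)^2 + 1/4))) s) ∧
    (∫ q in (0 : ℝ)..qmax, Real.sqrt (h + 1 / Real.sqrt (q^2 + 1/4)))
      = 2 * k^2 * ∫ s in (0 : ℝ)..1,
          Real.sqrt (1 - s^2) /
            (Real.sqrt (1 - k^2 * s^2) * (1 - 2 * k^2 * s^2)^2) := by
  obtain ⟨hhl, hhr⟩ := hh
  have h2pos : (0:ℝ) < 2 + h := by linarith
  have hkpos : 0 < k := by
    rw [hk]; exact div_pos (Real.sqrt_pos.mpr h2pos) two_pos
  have hk2 : 4 * k ^ 2 = 2 + h := by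
    rw [hk, div_pow, Real.sq_sqrt h2pos.le]; ring
  have hklt : k ^ 2 < 1 / 2 := by linarith
  -- basic positivity facts for s with s^2 ≤ 1
  have hA : ∀ x : ℝ, x ^ 2 ≤ 1 → 0 < 1 - k ^ 2 * x ^ 2 := by
    intro x hx; nlinarith [sq_nonneg k, sq_nonneg x]
  have hD : ∀ x : ℝ, x ^ 2 ≤ 1 → 0 < 1 - 2 * k ^ 2 * x ^ 2 := by
    intro x hx; nlinarith [sq_nonneg k, sq_nonneg x]
  -- key sqrt computation
  have hsq : ∀ x : ℝ, x ^ 2 ≤ 1 →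
      Real.sqrt ((qs x) ^ 2 + 1 / 4) = 1 / (2 * (1 - 2 * k ^ 2 * x ^ 2)) := by
    intro x hx
    have hAx := hA x hx
    have hDx := hD x hx
    have hqs2 : (qs x) ^ 2 = k ^ 2 * x ^ 2 * (1 - k ^ 2 * x ^ 2) / (1 - 2 * k ^ 2 * x ^ 2) ^ 2 := by
      rw [hqs, div_pow, mul_pow, mul_pow, Real.sq_sqrt hAx.le]
    have key : (qs x) ^ 2 + 1 / 4 = (1 / (2 * (1 - 2 * k ^ 2 * x ^ 2))) ^ 2 := by
      rw [hqs2, div_add' _ _ _ (by positivity), div_pow, eq_div_iff (by positivity), div_mul_eq_mul_div, div_eq_iff (by positivity)]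
      ring
    rw [key, Real.sqrt_sq (by positivity)]
  -- part 1
  have part1 : ∀ s ∈ Icc (0 : ℝ) 1,
      -(1 / Real.sqrt ((qs s)^2 + 1/4)) = (2 + h) * s^2 - 2 := by
    intro s hs
    have hs2 : s ^ 2 ≤ 1 := by nlinarith [hs.1, hs.2]
    rw [hsq s hs2, one_div_one_div]
    linear_combination s ^ 2 * hk2
  -- value of h + 1/sqrt(...)
  have hval : ∀ x : ℝ, x ^ 2 ≤ 1 →
      h + 1 / Real.sqrt ((qs x) ^ 2 + 1 / 4) = 4 * k ^ 2 * (1 - x ^ 2) := by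
    intro x hx
    rw [hsq x hx, one_div_one_div]
    linear_combination -hk2
  -- derivative of qs
  have main_deriv : ∀ x : ℝ, x ^ 2 ≤ 1 →
      HasDerivAt qs (k / (Real.sqrt (1 - k ^ 2 * x ^ 2) * (1 - 2 * k ^ 2 * x ^ 2) ^ 2)) x := by
    intro x hx
    have hAx := hA x hx
    have hDx := hD x hx
    have ha : (0:ℝ) < Real.sqrt (1 - k ^ 2 * x ^ 2) := Real.sqrt_pos.mpr hAx
    have ha2 : (Real.sqrt (1 - k ^ 2 * x ^ 2)) ^ 2 = 1 - k ^ 2 * x ^ 2 := Real.sq_sqrt hAx.le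
    have d1 : HasDerivAt (fun y : ℝ => 1 - k ^ 2 * y ^ 2) (-(k ^ 2 * (2 * x))) x := by
      simpa using ((hasDerivAt_pow 2 x).const_mul (k ^ 2)).const_sub 1
    have d2 := d1.sqrt (by positivity)
    have d3 : HasDerivAt (fun y : ℝ => k * y) k x := by
      simpa using (hasDerivAt_id x).const_mul k
    have dN := d3.mul d2
    have dD : HasDerivAt (fun y : ℝ => 1 - 2 * k ^ 2 * y ^ 2) (-(2 * k ^ 2 * (2 * x))) x := by
      simpa using ((hasDerivAt_pow 2 x).const_mul (2 * k ^ 2)).const_sub 1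
    have dq := dN.div dD hDx.ne'
    have hfun : qs = fun y => k * y * Real.sqrt (1 - k ^ 2 * y ^ 2) / (1 - 2 * k ^ 2 * y ^ 2) :=
      funext hqs
    rw [hfun]
    refine dq.congr_deriv ?_
    simp only [Pi.mul_apply]
    set a := Real.sqrt (1 - k ^ 2 * x ^ 2) with hadef
    field_simp
    rw [ha2]; ring
  refine ⟨part1, ?_, ?_⟩
  · intro s hs
    have hs2 : s ^ 2 ≤ 1 := by nlinarith [hs.1.le, hs.2.le]
    have ht : (0:ℝ) < 1 - s ^ 2 := by nlinarith [hs.1, hs.2]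
    have hAx := hA s hs2
    have hDx := hD s hs2
    have ha : (0:ℝ) < Real.sqrt (1 - k ^ 2 * s ^ 2) := Real.sqrt_pos.mpr hAx
    have htt : (0:ℝ) < Real.sqrt (1 - s ^ 2) := Real.sqrt_pos.mpr ht
    convert main_deriv s hs2 using 1
    rw [hval s hs2,
      show 4 * k ^ 2 * (1 - s ^ 2) = (2 * k) ^ 2 * (1 - s ^ 2) by ring,
      Real.sqrt_mul (by positivity), Real.sqrt_sq (by positivity)]
    field_simp
  · -- the change of variables
    have hg : Continuous fun q : ℝ => Real.sqrt (h + 1 / Real.sqrt (q ^ 2 + 1 / 4)) := by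
      apply Real.continuous_sqrt.comp
      apply continuous_const.add
      apply continuous_const.div
      · exact Real.continuous_sqrt.comp (by continuity)
      · intro q; positivity
    have huIcc : uIcc (0:ℝ) 1 = Icc 0 1 := uIcc_of_le zero_le_one
    have hmem : ∀ x ∈ uIcc (0:ℝ) 1, x ^ 2 ≤ 1 := by
      intro x hx; rw [huIcc] at hx; nlinarith [hx.1, hx.2]
    have hd : ∀ x ∈ uIcc (0:ℝ) 1,
        HasDerivAt qs (k / (Real.sqrt (1 - k ^ 2 * x ^ 2) * (1 - 2 * k ^ 2 * x ^ 2) ^ 2)) x :=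
      fun x hx => main_deriv x (hmem x hx)
    have hf'cont : ContinuousOn
        (fun x : ℝ => k / (Real.sqrt (1 - k ^ 2 * x ^ 2) * (1 - 2 * k ^ 2 * x ^ 2) ^ 2))
        (uIcc (0:ℝ) 1) := by
      apply continuousOn_const.div
      · exact ((Real.continuous_sqrt.comp (by continuity)).mul (by continuity)).continuousOn
      · intro x hx
        have h2 := hmem x hx
        have := hA x h2
        have := hD x h2
        positivity
    have hsub := intervalIntegral.integral_comp_smul_deriv hd hf'cont hg
    have hqs0 : qs 0 = 0 := by rw [hqs]; simp
    have hqs1 : qs 1 = qmax := by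
      rw [hqs, hq]
      have hAx : (0:ℝ) < 1 - k ^ 2 := by nlinarith
      have hDx : (0:ℝ) < 1 - 2 * k ^ 2 := by nlinarith
      have hne : h ≠ 0 := by linarith
      have key : 1 / h ^ 2 - 1 / 4 =
          (k * Real.sqrt (1 - k ^ 2) / (1 - 2 * k ^ 2)) ^ 2 := by
        rw [div_pow, mul_pow, Real.sq_sqrt hAx.le]
        rw [div_sub_div _ _ (by positivity) (by norm_num), div_eq_div_iff (by positivity) (by positivity)]
        have : h = 4 * k^2 - 2 := by linarith
        subst this
        ring
      rw [key, Real.sqrt_sq (by positivity)]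
      norm_num
    rw [hqs0, hqs1] at hsub
    rw [← hsub]
    rw [← intervalIntegral.integral_const_mul]
    apply intervalIntegral.integral_congr
    intro x hx
    have h2 := hmem x hx
    have hAx := hA x h2
    have hDx := hD x h2
    have ha : (0:ℝ) < Real.sqrt (1 - k ^ 2 * x ^ 2) := Real.sqrt_pos.mpr hAx
    simp only [smul_eq_mul, Function.comp]
    rw [hval x h2,
      show 4 * k ^ 2 * (1 - x ^ 2) = (2 * k) ^ 2 * (1 - x ^ 2) by ring,
      Real.sqrt_mul (by positivity), Real.sqrt_sq (by positivity)]
    ring
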